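/- arXiv:2406.16392 — 5 statements merged into one kernel-verified Lean document; each statement's English description precedes it below -/
import Mathlib

section
/- Let π be a permutation of [n] and let I be an interval of π. Then the number of direct descendants of I in the interval poset of π (that is, the number of intervals J of π with J ⊊ I such that no interval K of π satisfies J ⊊ K ⊊ I) is never exactly 3. -/
/-- `π` is (the extension by identity-like behavior of) a permutation of `[1,n]`:
it maps the set `{1,…,n}` into (hence onto) itself. -/
def PermOn (n : ℕ) (π : Equiv.Perm ℕ) : Prop :=
  ∀ v ∈ Finset.Icc 1 n, π v ∈ Finset.Icc 1 n

/-- `[a,b]` is an interval (block) of the permutation `π` of `[1,n]`: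
`1 ≤ a ≤ b ≤ n` and the set of positions `{π⁻¹ v : a ≤ v ≤ b}` is a set of
consecutive integers. -/
def IsBlock (n : ℕ) (π : Equiv.Perm ℕ) (a b : ℕ) : Prop :=
  1 ≤ a ∧ a ≤ b ∧ b ≤ n ∧ ∃ c d : ℕ, (Finset.Icc a b).image π.symm = Finset.Icc c d

/-- A finite set `I ⊆ ℕ` is an interval of `π` if it is of the form `[a,b]`
for some block `[a,b]` of `π`. -/
def IsIntervalSet (n : ℕ) (π : Equiv.Perm ℕ) (I : Finset ℕ) : Prop :=
  ∃ a b : ℕ, I = Finset.Icc a b ∧ IsBlock n π a b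

lemma icc_union_icc {a1 b1 a2 b2 : ℕ} (h1 : a1 ≤ b1) (h2 : a2 ≤ b2)
    (h12 : a2 ≤ b1 + 1) (h21 : a1 ≤ b2 + 1) :
    Finset.Icc a1 b1 ∪ Finset.Icc a2 b2 = Finset.Icc (min a1 a2) (max b1 b2) := by
  ext x; simp only [Finset.mem_union, Finset.mem_Icc]; omega

lemma block_image_data {n : ℕ} {π : Equiv.Perm ℕ} {a b : ℕ} (h : IsBlock n π a b) :
    ∃ c d, c ≤ d ∧ (Finset.Icc a b).image π.symm = Finset.Icc c d := by
  obtain ⟨-, hab, -, c, d, heq⟩ := h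
  refine ⟨c, d, ?_, heq⟩
  have : (Finset.Icc c d).Nonempty := by
    rw [← heq]; exact (Finset.nonempty_Icc.mpr hab).image _
  exact Finset.nonempty_Icc.mp this

lemma block_union {n : ℕ} {π : Equiv.Perm ℕ} {a1 b1 a2 b2 c1 d1 c2 d2 : ℕ}
    (h1 : IsBlock n π a1 b1) (h2 : IsBlock n π a2 b2)
    (hi1 : (Finset.Icc a1 b1).image π.symm = Finset.Icc c1 d1)
    (hi2 : (Finset.Icc a2 b2).image π.symm = Finset.Icc c2 d2)
    (hv : a2 ≤ b1 + 1 ∧ a1 ≤ b2 + 1) (hp : c2 ≤ d1 + 1 ∧ c1 ≤ d2 + 1) :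
    IsBlock n π (min a1 a2) (max b1 b2) := by
  obtain ⟨ha1, hab1, hb1, -⟩ := h1
  obtain ⟨ha2, hab2, hb2, -⟩ := h2
  have hc1 : c1 ≤ d1 := by
    have : (Finset.Icc c1 d1).Nonempty := by
      rw [← hi1]; exact (Finset.nonempty_Icc.mpr hab1).image _
    exact Finset.nonempty_Icc.mp this
  have hc2 : c2 ≤ d2 := by
    have : (Finset.Icc c2 d2).Nonempty := by
      rw [← hi2]; exact (Finset.nonempty_Icc.mpr hab2).image _
    exact Finset.nonempty_Icc.mp this
  refine ⟨by omega, by omega, by omega, min c1 c2, max d1 d2, ?_⟩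
  rw [← icc_union_icc hab1 hab2 hv.1 hv.2, Finset.image_union, hi1, hi2,
    icc_union_icc hc1 hc2 hp.1 hp.2]

lemma singleton_block {n : ℕ} (π : Equiv.Perm ℕ) {v : ℕ} (h1 : 1 ≤ v) (h2 : v ≤ n) :
    IsBlock n π v v :=
  ⟨h1, le_rfl, h2, π.symm v, π.symm v, by simp⟩

lemma exists_max_above {n : ℕ} {π : Equiv.Perm ℕ} {I J : Finset ℕ}
    (hJ : IsIntervalSet n π J) (hJI : J ⊂ I) :
    ∃ M, IsIntervalSet n π M ∧ J ⊆ M ∧ M ⊂ I ∧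
      ¬∃ K, IsIntervalSet n π K ∧ M ⊂ K ∧ K ⊂ I := by
  classical
  set S : Finset (Finset ℕ) :=
    I.powerset.filter (fun K => IsIntervalSet n π K ∧ J ⊆ K ∧ K ≠ I) with hS
  have hJS : J ∈ S := by
    simp only [hS, Finset.mem_filter, Finset.mem_powerset]
    exact ⟨hJI.subset, hJ, subset_rfl, hJI.ne⟩
  obtain ⟨M, hMS, hMmax⟩ := S.exists_maximal ⟨J, hJS⟩
  simp only [hS, Finset.mem_filter, Finset.mem_powerset] at hMS
  obtain ⟨hMI, hMint, hJM, hMne⟩ := hMS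
  refine ⟨M, hMint, hJM, ssubset_of_subset_of_ne hMI hMne, ?_⟩
  rintro ⟨K, hKint, hMK, hKI⟩
  exact hMK.not_subset (hMmax (y := K) (by
    simp only [hS, Finset.mem_filter, Finset.mem_powerset]
    exact ⟨hKI.subset, hKint, hJM.trans hMK.subset, hKI.ne⟩) hMK.subset)

lemma pos_disjoint {π : Equiv.Perm ℕ} {ai bi ci di aj bj cj dj : ℕ}
    (hi : (Finset.Icc ai bi).image π.symm = Finset.Icc ci di)
    (hj : (Finset.Icc aj bj).image π.symm = Finset.Icc cj dj)
    (hci : ci ≤ di) (hcj : cj ≤ dj)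
    (hd : bi < aj ∨ bj < ai) : di < cj ∨ dj < ci := by
  by_contra h
  push_neg at h
  have hp1 : max ci cj ∈ Finset.Icc ci di := by simp only [Finset.mem_Icc]; omega
  have hp2 : max ci cj ∈ Finset.Icc cj dj := by simp only [Finset.mem_Icc]; omega
  rw [← hi] at hp1; rw [← hj] at hp2
  obtain ⟨v, hv, hv2⟩ := Finset.mem_image.mp hp1
  obtain ⟨w, hw, hw2⟩ := Finset.mem_image.mp hp2
  have : v = w := π.symm.injective (hv2.trans hw2.symm)
  subst this
  simp only [Finset.mem_Icc] at hv hw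
  omega

lemma three_partition {a b a1 b1 a2 b2 a3 b3 : ℕ}
    (h1 : a1 ≤ b1) (h2 : a2 ≤ b2) (h3 : a3 ≤ b3)
    (hd12 : b1 < a2 ∨ b2 < a1) (hd13 : b1 < a3 ∨ b3 < a1) (hd23 : b2 < a3 ∨ b3 < a2)
    (hcov : ∀ x, (a ≤ x ∧ x ≤ b) ↔
      ((a1 ≤ x ∧ x ≤ b1) ∨ (a2 ≤ x ∧ x ≤ b2) ∨ (a3 ≤ x ∧ x ≤ b3))) :
    (a1 = a ∧ b1 + 1 = a2 ∧ b2 + 1 = a3 ∧ b3 = b) ∨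
    (a1 = a ∧ b1 + 1 = a3 ∧ b3 + 1 = a2 ∧ b2 = b) ∨
    (a2 = a ∧ b2 + 1 = a1 ∧ b1 + 1 = a3 ∧ b3 = b) ∨
    (a2 = a ∧ b2 + 1 = a3 ∧ b3 + 1 = a1 ∧ b1 = b) ∨
    (a3 = a ∧ b3 + 1 = a1 ∧ b1 + 1 = a2 ∧ b2 = b) ∨
    (a3 = a ∧ b3 + 1 = a2 ∧ b2 + 1 = a1 ∧ b1 = b) := by
  have k1 := hcov a
  have k2 := hcov b
  have k3 := hcov a1
  have k4 := hcov a2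
  have k5 := hcov a3
  have k6 := hcov (b1 + 1)
  have k7 := hcov (b2 + 1)
  have k8 := hcov (b3 + 1)
  have k9 := hcov b1
  have k10 := hcov b2
  have k11 := hcov b3
  rcases hd12 with h12 | h12
  · rcases hd23 with h23 | h23
    · exact Or.inl ⟨by omega, by omega, by omega, by omega⟩
    · rcases hd13 with h13 | h13
      · exact Or.inr (Or.inl ⟨by omega, by omega, by omega, by omega⟩)
      · exact Or.inr (Or.inr (Or.inr (Or.inr (Or.inl
          ⟨by omega, by omega, by omega, by omega⟩))))
  · rcases hd13 with h13 | h13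
    · exact Or.inr (Or.inr (Or.inl ⟨by omega, by omega, by omega, by omega⟩))
    · rcases hd23 with h23 | h23
      · exact Or.inr (Or.inr (Or.inr (Or.inl
          ⟨by omega, by omega, by omega, by omega⟩)))
      · exact Or.inr (Or.inr (Or.inr (Or.inr (Or.inr
          ⟨by omega, by omega, by omega, by omega⟩))))

lemma adj_contra {n : ℕ} {π : Equiv.Perm ℕ} (a b : ℕ) {ai bi ci di aj bj cj dj : ℕ}
    (hBi : IsBlock n π ai bi) (hBj : IsBlock n π aj bj)
    (hii : (Finset.Icc ai bi).image π.symm = Finset.Icc ci di)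
    (hij : (Finset.Icc aj bj).image π.symm = Finset.Icc cj dj)
    (hv : bi + 1 = aj)
    (hp : di + 1 = cj ∨ dj + 1 = ci)
    (hsub : a ≤ ai ∧ bj ≤ b)
    (hproper : a < ai ∨ bj < b)
    (hmaxi : ¬∃ K, IsIntervalSet n π K ∧ Finset.Icc ai bi ⊂ K ∧ K ⊂ Finset.Icc a b) :
    False := by
  have habi : ai ≤ bi := hBi.2.1
  have habj : aj ≤ bj := hBj.2.1
  have hci : ci ≤ di := Finset.nonempty_Icc.mp (hii ▸ (Finset.nonempty_Icc.mpr habi).image _)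
  have hcj : cj ≤ dj := Finset.nonempty_Icc.mp (hij ▸ (Finset.nonempty_Icc.mpr habj).image _)
  have hU : IsBlock n π (min ai aj) (max bi bj) :=
    block_union hBi hBj hii hij ⟨by omega, by omega⟩ ⟨by omega, by omega⟩
  have e1 : min ai aj = ai := by omega
  have e2 : max bi bj = bj := by omega
  rw [e1, e2] at hU
  apply hmaxi
  refine ⟨Finset.Icc ai bj, ⟨ai, bj, rfl, hU⟩, ?_, ?_⟩
  · rw [Finset.ssubset_def]
    constructor
    · exact Finset.Icc_subset_Icc le_rfl (by omega)
    · intro hcon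
      have := hcon (Finset.mem_Icc.mpr (⟨by omega, le_rfl⟩ : ai ≤ bj ∧ bj ≤ bj))
      simp only [Finset.mem_Icc] at this; omega
  · rw [Finset.ssubset_def]
    constructor
    · exact Finset.Icc_subset_Icc (by omega) (by omega)
    · intro hcon
      rcases hproper with hp' | hp'
      · have := hcon (Finset.mem_Icc.mpr (⟨le_rfl, by omega⟩ : a ≤ a ∧ a ≤ b))
        simp only [Finset.mem_Icc] at this; omega
      · have := hcon (Finset.mem_Icc.mpr (⟨by omega, le_rfl⟩ : a ≤ b ∧ b ≤ b))
        simp only [Finset.mem_Icc] at this; omega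

lemma pair_dichotomy {n : ℕ} {π : Equiv.Perm ℕ} (a b : ℕ) {ai bi ci di aj bj cj dj : ℕ}
    (hBi : IsBlock n π ai bi) (hBj : IsBlock n π aj bj)
    (hii : (Finset.Icc ai bi).image π.symm = Finset.Icc ci di)
    (hij : (Finset.Icc aj bj).image π.symm = Finset.Icc cj dj)
    (hsi : Finset.Icc ai bi ⊂ Finset.Icc a b) (hsj : Finset.Icc aj bj ⊂ Finset.Icc a b)
    (hne : Finset.Icc ai bi ≠ Finset.Icc aj bj)
    (hmaxi : ¬∃ K, IsIntervalSet n π K ∧ Finset.Icc ai bi ⊂ K ∧ K ⊂ Finset.Icc a b)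
    (hmaxj : ¬∃ K, IsIntervalSet n π K ∧ Finset.Icc aj bj ⊂ K ∧ K ⊂ Finset.Icc a b) :
    (bi < aj ∨ bj < ai) ∨
      ∀ x, (a ≤ x ∧ x ≤ b) ↔ ((ai ≤ x ∧ x ≤ bi) ∨ (aj ≤ x ∧ x ≤ bj)) := by
  have habi : ai ≤ bi := hBi.2.1
  have habj : aj ≤ bj := hBj.2.1
  by_cases hov : aj ≤ bi ∧ ai ≤ bj
  · -- overlapping: positions overlap too
    have hm1 : max ai aj ∈ Finset.Icc ai bi := by simp only [Finset.mem_Icc]; omega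
    have hm2 : max ai aj ∈ Finset.Icc aj bj := by simp only [Finset.mem_Icc]; omega
    have hq1 : π.symm (max ai aj) ∈ Finset.Icc ci di := by
      rw [← hii]; exact Finset.mem_image_of_mem _ hm1
    have hq2 : π.symm (max ai aj) ∈ Finset.Icc cj dj := by
      rw [← hij]; exact Finset.mem_image_of_mem _ hm2
    simp only [Finset.mem_Icc] at hq1 hq2
    have hU : IsBlock n π (min ai aj) (max bi bj) :=
      block_union hBi hBj hii hij ⟨by omega, by omega⟩ ⟨by omega, by omega⟩
    have hsubi : a ≤ ai ∧ bi ≤ b := (Finset.Icc_subset_Icc_iff habi).mp hsi.subset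
    have hsubj : a ≤ aj ∧ bj ≤ b := (Finset.Icc_subset_Icc_iff habj).mp hsj.subset
    have hUsub : Finset.Icc (min ai aj) (max bi bj) ⊆ Finset.Icc a b :=
      Finset.Icc_subset_Icc (by omega) (by omega)
    by_cases hUI : Finset.Icc (min ai aj) (max bi bj) = Finset.Icc a b
    · right
      intro x
      have := Finset.ext_iff.mp hUI x
      simp only [Finset.mem_Icc] at this
      omega
    · exfalso
      have hUI' : Finset.Icc (min ai aj) (max bi bj) ⊂ Finset.Icc a b :=
        ssubset_of_subset_of_ne hUsub hUI
      have hiU : Finset.Icc ai bi ⊆ Finset.Icc (min ai aj) (max bi bj) :=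
        Finset.Icc_subset_Icc (min_le_left _ _) (le_max_left _ _)
      by_cases hEq : Finset.Icc ai bi = Finset.Icc (min ai aj) (max bi bj)
      · have hjU : Finset.Icc aj bj ⊆ Finset.Icc ai bi := by
          rw [hEq]; exact Finset.Icc_subset_Icc (min_le_right _ _) (le_max_right _ _)
        exact hmaxj ⟨Finset.Icc ai bi, ⟨ai, bi, rfl, hBi⟩,
          ssubset_of_subset_of_ne hjU (Ne.symm hne), hsi⟩
      · exact hmaxi ⟨Finset.Icc (min ai aj) (max bi bj),
          ⟨_, _, rfl, hU⟩, ssubset_of_subset_of_ne hiU hEq, hUI'⟩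
  · left; omega

lemma union_case {a b a1 b1 a2 b2 a3 b3 : ℕ}
    (h1 : a1 ≤ b1) (h2 : a2 ≤ b2) (h3 : a3 ≤ b3)
    (hs1 : a ≤ a1 ∧ b1 ≤ b) (hs2 : a ≤ a2 ∧ b2 ≤ b) (hs3 : a ≤ a3 ∧ b3 ≤ b)
    (hp1 : a < a1 ∨ b1 < b) (hp2 : a < a2 ∨ b2 < b) (hp3 : a < a3 ∨ b3 < b)
    (u12 : ∀ x, (a ≤ x ∧ x ≤ b) ↔ ((a1 ≤ x ∧ x ≤ b1) ∨ (a2 ≤ x ∧ x ≤ b2)))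
    (D13 : (b1 < a3 ∨ b3 < a1) ∨
      ∀ x, (a ≤ x ∧ x ≤ b) ↔ ((a1 ≤ x ∧ x ≤ b1) ∨ (a3 ≤ x ∧ x ≤ b3)))
    (D23 : (b2 < a3 ∨ b3 < a2) ∨
      ∀ x, (a ≤ x ∧ x ≤ b) ↔ ((a2 ≤ x ∧ x ≤ b2) ∨ (a3 ≤ x ∧ x ≤ b3))) :
    False := by
  rcases D13 with d13 | u13 <;> rcases D23 with d23 | u23
  · have w7 := u12 a3
    omega
  · -- J1, J3 disjoint; J2 ∪ J3 = I
    have x3 := u23 a1; have x4 := u23 b1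
    have w1 := u12 a; have w2 := u12 b
    omega
  · -- J2, J3 disjoint; J1 ∪ J3 = I
    have x5 := u13 a2; have x6 := u13 b2
    have w1 := u12 a; have w2 := u12 b
    omega
  · have w1 := u12 a; have w2 := u12 b
    have x1 := u13 a; have x2 := u13 b
    have y1 := u23 a; have y2 := u23 b
    omega

set_option maxHeartbeats 4000000 in
theorem no_three_direct_descendants (n : ℕ) (π : Equiv.Perm ℕ) (hπ : PermOn n π)
    (I : Finset ℕ) (hI : IsIntervalSet n π I) :
    {J : Finset ℕ | IsIntervalSet n π J ∧ J ⊂ I ∧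
      ¬ ∃ K : Finset ℕ, IsIntervalSet n π K ∧ J ⊂ K ∧ K ⊂ I}.ncard ≠ 3 := by
  intro h3
  rw [Set.ncard_eq_three] at h3
  obtain ⟨J1, J2, J3, hne12, hne13, hne23, hset⟩ := h3
  have memset : ∀ J : Finset ℕ, (IsIntervalSet n π J ∧ J ⊂ I ∧
      ¬∃ K, IsIntervalSet n π K ∧ J ⊂ K ∧ K ⊂ I) ↔ (J = J1 ∨ J = J2 ∨ J = J3) := by
    intro J
    have := Set.ext_iff.mp hset J
    simpa using this
  obtain ⟨hint1, hsub1, hmax1⟩ := (memset J1).mpr (Or.inl rfl)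
  obtain ⟨hint2, hsub2, hmax2⟩ := (memset J2).mpr (Or.inr (Or.inl rfl))
  obtain ⟨hint3, hsub3, hmax3⟩ := (memset J3).mpr (Or.inr (Or.inr rfl))
  obtain ⟨a, b, hIeq, hIblk⟩ := hI
  obtain ⟨a1, b1, hJ1eq, hB1⟩ := hint1
  obtain ⟨a2, b2, hJ2eq, hB2⟩ := hint2
  obtain ⟨a3, b3, hJ3eq, hB3⟩ := hint3
  subst hIeq hJ1eq hJ2eq hJ3eq
  obtain ⟨c, d, hcd, hIim⟩ := block_image_data hIblk
  obtain ⟨c1, d1, hcd1, him1⟩ := block_image_data hB1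
  obtain ⟨c2, d2, hcd2, him2⟩ := block_image_data hB2
  obtain ⟨c3, d3, hcd3, him3⟩ := block_image_data hB3
  have hab : a ≤ b := hIblk.2.1
  have hab1 : a1 ≤ b1 := hB1.2.1
  have hab2 : a2 ≤ b2 := hB2.2.1
  have hab3 : a3 ≤ b3 := hB3.2.1
  have hs1 : a ≤ a1 ∧ b1 ≤ b := (Finset.Icc_subset_Icc_iff hab1).mp hsub1.subset
  have hs2 : a ≤ a2 ∧ b2 ≤ b := (Finset.Icc_subset_Icc_iff hab2).mp hsub2.subset
  have hs3 : a ≤ a3 ∧ b3 ≤ b := (Finset.Icc_subset_Icc_iff hab3).mp hsub3.subset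
  have hp1 : a < a1 ∨ b1 < b := by
    by_contra h
    push_neg at h
    exact hsub1.ne (by rw [show a1 = a by omega, show b1 = b by omega])
  have hp2 : a < a2 ∨ b2 < b := by
    by_contra h
    push_neg at h
    exact hsub2.ne (by rw [show a2 = a by omega, show b2 = b by omega])
  have hp3 : a < a3 ∨ b3 < b := by
    by_contra h
    push_neg at h
    exact hsub3.ne (by rw [show a3 = a by omega, show b3 = b by omega])
  have D12 := pair_dichotomy a b hB1 hB2 him1 him2 hsub1 hsub2 hne12 hmax1 hmax2
  have D13 := pair_dichotomy a b hB1 hB3 him1 him3 hsub1 hsub3 hne13 hmax1 hmax3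
  have D23 := pair_dichotomy a b hB2 hB3 him2 him3 hsub2 hsub3 hne23 hmax2 hmax3
  rcases D12 with d12 | u12
  rotate_left
  · exact union_case hab1 hab2 hab3 hs1 hs2 hs3 hp1 hp2 hp3 u12 D13 D23
  rcases D13 with d13 | u13
  rotate_left
  · refine union_case hab1 hab3 hab2 hs1 hs3 hs2 hp1 hp3 hp2 u13 ?_ ?_
    · exact Or.inl (by omega)
    · rcases D23 with d23 | u23
      · exact Or.inl (by omega)
      · exact Or.inr (fun x => by have := u23 x; omega)
  rcases D23 with d23 | u23
  rotate_left
  · refine union_case hab2 hab3 hab1 hs2 hs3 hs1 hp2 hp3 hp1 u23 ?_ ?_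
    · exact Or.inl (by omega)
    · exact Or.inl (by omega)
  -- all three pairwise disjoint
  have habs : a < b := by omega
  have cover : ∀ x, (a ≤ x ∧ x ≤ b) ↔
      ((a1 ≤ x ∧ x ≤ b1) ∨ (a2 ≤ x ∧ x ≤ b2) ∨ (a3 ≤ x ∧ x ≤ b3)) := by
    intro v
    constructor
    · rintro ⟨hv1, hv2⟩
      have hsing : IsIntervalSet n π (Finset.Icc v v) :=
        ⟨v, v, rfl, singleton_block π (le_trans hIblk.1 hv1) (le_trans hv2 hIblk.2.2.1)⟩
      have hpr : Finset.Icc v v ⊂ Finset.Icc a b := by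
        rw [Finset.ssubset_def]
        refine ⟨Finset.Icc_subset_Icc hv1 hv2, fun hcon => ?_⟩
        have h1 := hcon (Finset.mem_Icc.mpr ⟨le_rfl, hab⟩)
        have h2 := hcon (Finset.mem_Icc.mpr ⟨hab, le_rfl⟩)
        simp only [Finset.mem_Icc] at h1 h2
        omega
      obtain ⟨M, hMint, hvM, hMI, hMmax⟩ := exists_max_above hsing hpr
      have hM3 := (memset M).mp ⟨hMint, hMI, hMmax⟩
      have hvM' : v ∈ M := hvM (Finset.mem_Icc.mpr ⟨le_rfl, le_rfl⟩)
      rcases hM3 with rfl | rfl | rfl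
      · exact Or.inl (Finset.mem_Icc.mp hvM')
      · exact Or.inr (Or.inl (Finset.mem_Icc.mp hvM'))
      · exact Or.inr (Or.inr (Finset.mem_Icc.mp hvM'))
    · intro h
      omega
  have vpart := three_partition hab1 hab2 hab3 d12 d13 d23 cover
  have pd12 := pos_disjoint him1 him2 hcd1 hcd2 d12
  have pd13 := pos_disjoint him1 him3 hcd1 hcd3 d13
  have pd23 := pos_disjoint him2 him3 hcd2 hcd3 d23
  have hIun : Finset.Icc a b =
      Finset.Icc a1 b1 ∪ (Finset.Icc a2 b2 ∪ Finset.Icc a3 b3) := by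
    ext x
    simp only [Finset.mem_union, Finset.mem_Icc]
    have := cover x
    omega
  have hPim : Finset.Icc c d =
      Finset.Icc c1 d1 ∪ (Finset.Icc c2 d2 ∪ Finset.Icc c3 d3) := by
    rw [← hIim, hIun, Finset.image_union, Finset.image_union, him1, him2, him3]
  have pcover : ∀ x, (c ≤ x ∧ x ≤ d) ↔
      ((c1 ≤ x ∧ x ≤ d1) ∨ (c2 ≤ x ∧ x ≤ d2) ∨ (c3 ≤ x ∧ x ≤ d3)) := by
    intro x
    have := Finset.ext_iff.mp hPim x
    simp only [Finset.mem_union, Finset.mem_Icc] at this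
    omega
  have ppart := three_partition hcd1 hcd2 hcd3 pd12 pd13 pd23 pcover
  clear memset hset
  rcases vpart with ⟨v1, v2, v3, v4⟩ | ⟨v1, v2, v3, v4⟩ | ⟨v1, v2, v3, v4⟩ |
    ⟨v1, v2, v3, v4⟩ | ⟨v1, v2, v3, v4⟩ | ⟨v1, v2, v3, v4⟩
  · rcases ppart with ⟨p1, p2, p3, p4⟩ | ⟨p1, p2, p3, p4⟩ | ⟨p1, p2, p3, p4⟩ |
      ⟨p1, p2, p3, p4⟩ | ⟨p1, p2, p3, p4⟩ | ⟨p1, p2, p3, p4⟩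
    · exact adj_contra a b hB1 hB2 him1 him2 v2 (Or.inl p2) (by omega) (by omega) hmax1
    · exact adj_contra a b hB2 hB3 him2 him3 v3 (Or.inr p3) (by omega) (by omega) hmax2
    · exact adj_contra a b hB1 hB2 him1 him2 v2 (Or.inr p2) (by omega) (by omega) hmax1
    · exact adj_contra a b hB2 hB3 him2 him3 v3 (Or.inl p2) (by omega) (by omega) hmax2
    · exact adj_contra a b hB1 hB2 him1 him2 v2 (Or.inl p3) (by omega) (by omega) hmax1
    · exact adj_contra a b hB1 hB2 him1 him2 v2 (Or.inr p3) (by omega) (by omega) hmax1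
  · rcases ppart with ⟨p1, p2, p3, p4⟩ | ⟨p1, p2, p3, p4⟩ | ⟨p1, p2, p3, p4⟩ |
      ⟨p1, p2, p3, p4⟩ | ⟨p1, p2, p3, p4⟩ | ⟨p1, p2, p3, p4⟩
    · exact adj_contra a b hB3 hB2 him3 him2 v3 (Or.inr p3) (by omega) (by omega) hmax3
    · exact adj_contra a b hB1 hB3 him1 him3 v2 (Or.inl p2) (by omega) (by omega) hmax1
    · exact adj_contra a b hB1 hB3 him1 him3 v2 (Or.inl p3) (by omega) (by omega) hmax1
    · exact adj_contra a b hB1 hB3 him1 him3 v2 (Or.inr p3) (by omega) (by omega) hmax1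
    · exact adj_contra a b hB1 hB3 him1 him3 v2 (Or.inr p2) (by omega) (by omega) hmax1
    · exact adj_contra a b hB3 hB2 him3 him2 v3 (Or.inl p2) (by omega) (by omega) hmax3
  · rcases ppart with ⟨p1, p2, p3, p4⟩ | ⟨p1, p2, p3, p4⟩ | ⟨p1, p2, p3, p4⟩ |
      ⟨p1, p2, p3, p4⟩ | ⟨p1, p2, p3, p4⟩ | ⟨p1, p2, p3, p4⟩
    · exact adj_contra a b hB2 hB1 him2 him1 v2 (Or.inr p2) (by omega) (by omega) hmax2
    · exact adj_contra a b hB1 hB3 him1 him3 v3 (Or.inl p2) (by omega) (by omega) hmax1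
    · exact adj_contra a b hB2 hB1 him2 him1 v2 (Or.inl p2) (by omega) (by omega) hmax2
    · exact adj_contra a b hB1 hB3 him1 him3 v3 (Or.inr p3) (by omega) (by omega) hmax1
    · exact adj_contra a b hB2 hB1 him2 him1 v2 (Or.inr p3) (by omega) (by omega) hmax2
    · exact adj_contra a b hB2 hB1 him2 him1 v2 (Or.inl p3) (by omega) (by omega) hmax2
  · rcases ppart with ⟨p1, p2, p3, p4⟩ | ⟨p1, p2, p3, p4⟩ | ⟨p1, p2, p3, p4⟩ |
      ⟨p1, p2, p3, p4⟩ | ⟨p1, p2, p3, p4⟩ | ⟨p1, p2, p3, p4⟩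
    · exact adj_contra a b hB2 hB3 him2 him3 v2 (Or.inl p3) (by omega) (by omega) hmax2
    · exact adj_contra a b hB2 hB3 him2 him3 v2 (Or.inr p3) (by omega) (by omega) hmax2
    · exact adj_contra a b hB3 hB1 him3 him1 v3 (Or.inr p3) (by omega) (by omega) hmax3
    · exact adj_contra a b hB2 hB3 him2 him3 v2 (Or.inl p2) (by omega) (by omega) hmax2
    · exact adj_contra a b hB3 hB1 him3 him1 v3 (Or.inl p2) (by omega) (by omega) hmax3
    · exact adj_contra a b hB2 hB3 him2 him3 v2 (Or.inr p2) (by omega) (by omega) hmax2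
  · rcases ppart with ⟨p1, p2, p3, p4⟩ | ⟨p1, p2, p3, p4⟩ | ⟨p1, p2, p3, p4⟩ |
      ⟨p1, p2, p3, p4⟩ | ⟨p1, p2, p3, p4⟩ | ⟨p1, p2, p3, p4⟩
    · exact adj_contra a b hB1 hB2 him1 him2 v3 (Or.inl p2) (by omega) (by omega) hmax1
    · exact adj_contra a b hB3 hB1 him3 him1 v2 (Or.inr p2) (by omega) (by omega) hmax3
    · exact adj_contra a b hB3 hB1 him3 him1 v2 (Or.inr p3) (by omega) (by omega) hmax3
    · exact adj_contra a b hB3 hB1 him3 him1 v2 (Or.inl p3) (by omega) (by omega) hmax3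
    · exact adj_contra a b hB3 hB1 him3 him1 v2 (Or.inl p2) (by omega) (by omega) hmax3
    · exact adj_contra a b hB1 hB2 him1 him2 v3 (Or.inr p3) (by omega) (by omega) hmax1
  · rcases ppart with ⟨p1, p2, p3, p4⟩ | ⟨p1, p2, p3, p4⟩ | ⟨p1, p2, p3, p4⟩ |
      ⟨p1, p2, p3, p4⟩ | ⟨p1, p2, p3, p4⟩ | ⟨p1, p2, p3, p4⟩
    · exact adj_contra a b hB3 hB2 him3 him2 v2 (Or.inr p3) (by omega) (by omega) hmax3
    · exact adj_contra a b hB3 hB2 him3 him2 v2 (Or.inl p3) (by omega) (by omega) hmax3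
    · exact adj_contra a b hB2 hB1 him2 him1 v3 (Or.inl p2) (by omega) (by omega) hmax2
    · exact adj_contra a b hB3 hB2 him3 him2 v2 (Or.inr p2) (by omega) (by omega) hmax3
    · exact adj_contra a b hB2 hB1 him2 him1 v3 (Or.inr p3) (by omega) (by omega) hmax2
    · exact adj_contra a b hB3 hB2 him3 him2 v2 (Or.inl p2) (by omega) (by omega) hmax3
end

section
/- Let π be a permutation of [n] and let 1 ≤ a ≤ b < c < d ≤ n be such that [a,b], [b+1,c], [c+1,d], and [a,d] are all intervals of π. Then at least one of [a,c] and [b+1,d] is also an interval of π. -/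
lemma mem_image_symm (π : Equiv.Perm ℕ) (s : Finset ℕ) (y : ℕ) :
    y ∈ s.image π.symm ↔ π y ∈ s := by
  simp [Finset.mem_image, Equiv.symm_apply_eq]

theorem quotient_of_three_blocks (n : ℕ) (π : Equiv.Perm ℕ) (hπ : PermOn n π)
    (a b c d : ℕ) (ha : 1 ≤ a) (hab : a ≤ b) (hbc : b < c) (hcd : c < d) (hdn : d ≤ n)
    (h1 : IsBlock n π a b) (h2 : IsBlock n π (b + 1) c) (h3 : IsBlock n π (c + 1) d)
    (h4 : IsBlock n π a d) :
    IsBlock n π a c ∨ IsBlock n π (b + 1) d := by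
  obtain ⟨-, -, -, p1, q1, hS1⟩ := h1
  obtain ⟨-, -, -, p2, q2, hS2⟩ := h2
  obtain ⟨-, -, -, p3, q3, hS3⟩ := h3
  obtain ⟨-, -, -, P, Q, hS4⟩ := h4
  have m1 : ∀ y, π y ∈ Finset.Icc a b ↔ y ∈ Finset.Icc p1 q1 := fun y => by
    rw [← hS1, mem_image_symm]
  have m2 : ∀ y, π y ∈ Finset.Icc (b + 1) c ↔ y ∈ Finset.Icc p2 q2 := fun y => by
    rw [← hS2, mem_image_symm]
  have m3 : ∀ y, π y ∈ Finset.Icc (c + 1) d ↔ y ∈ Finset.Icc p3 q3 := fun y => by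
    rw [← hS3, mem_image_symm]
  have m4 : ∀ y, π y ∈ Finset.Icc a d ↔ y ∈ Finset.Icc P Q := fun y => by
    rw [← hS4, mem_image_symm]
  -- nonemptiness
  have ne1 : p1 ≤ q1 := Finset.nonempty_Icc.mp
    (hS1 ▸ Finset.Nonempty.image (Finset.nonempty_Icc.mpr hab) _)
  have ne2 : p2 ≤ q2 := Finset.nonempty_Icc.mp
    (hS2 ▸ Finset.Nonempty.image (Finset.nonempty_Icc.mpr hbc) _)
  have ne3 : p3 ≤ q3 := Finset.nonempty_Icc.mp
    (hS3 ▸ Finset.Nonempty.image (Finset.nonempty_Icc.mpr hcd) _)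
  -- cardinalities
  have card1 : q1 + 1 - p1 = b + 1 - a := by
    rw [← Nat.card_Icc, ← Nat.card_Icc, ← hS1,
      Finset.card_image_of_injective _ π.symm.injective]
  have card2 : q2 + 1 - p2 = c + 1 - (b + 1) := by
    rw [← Nat.card_Icc, ← Nat.card_Icc, ← hS2,
      Finset.card_image_of_injective _ π.symm.injective]
  have card3 : q3 + 1 - p3 = d + 1 - (c + 1) := by
    rw [← Nat.card_Icc, ← Nat.card_Icc, ← hS3,
      Finset.card_image_of_injective _ π.symm.injective]
  have cardT : Q + 1 - P = d + 1 - a := by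
    rw [← Nat.card_Icc, ← Nat.card_Icc, ← hS4,
      Finset.card_image_of_injective _ π.symm.injective]
  -- bounds: each small interval sits inside [P,Q]
  have sub1 : ∀ y, y ∈ Finset.Icc p1 q1 → y ∈ Finset.Icc P Q := fun y hy => by
    have := (m1 y).mpr hy
    refine (m4 y).mp ?_
    simp only [Finset.mem_Icc] at this ⊢
    omega
  have sub2 : ∀ y, y ∈ Finset.Icc p2 q2 → y ∈ Finset.Icc P Q := fun y hy => by
    have := (m2 y).mpr hy
    refine (m4 y).mp ?_
    simp only [Finset.mem_Icc] at this ⊢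
    omega
  have sub3 : ∀ y, y ∈ Finset.Icc p3 q3 → y ∈ Finset.Icc P Q := fun y hy => by
    have := (m3 y).mpr hy
    refine (m4 y).mp ?_
    simp only [Finset.mem_Icc] at this ⊢
    omega
  have b1 : P ≤ p1 ∧ q1 ≤ Q := by
    have hp := sub1 p1 (by simp [Finset.mem_Icc]; omega)
    have hq := sub1 q1 (by simp [Finset.mem_Icc]; omega)
    simp only [Finset.mem_Icc] at hp hq
    omega
  have b2 : P ≤ p2 ∧ q2 ≤ Q := by
    have hp := sub2 p2 (by simp [Finset.mem_Icc]; omega)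
    have hq := sub2 q2 (by simp [Finset.mem_Icc]; omega)
    simp only [Finset.mem_Icc] at hp hq
    omega
  have b3 : P ≤ p3 ∧ q3 ≤ Q := by
    have hp := sub3 p3 (by simp [Finset.mem_Icc]; omega)
    have hq := sub3 q3 (by simp [Finset.mem_Icc]; omega)
    simp only [Finset.mem_Icc] at hp hq
    omega
  -- pairwise disjointness, numerically
  have d12 : q1 < p2 ∨ q2 < p1 := by
    by_contra h
    push_neg at h
    have h1m := (m1 (max p1 p2)).mpr (by simp [Finset.mem_Icc]; omega)
    have h2m := (m2 (max p1 p2)).mpr (by simp [Finset.mem_Icc]; omega)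
    simp only [Finset.mem_Icc] at h1m h2m
    omega
  have d13 : q1 < p3 ∨ q3 < p1 := by
    by_contra h
    push_neg at h
    have h1m := (m1 (max p1 p3)).mpr (by simp [Finset.mem_Icc]; omega)
    have h3m := (m3 (max p1 p3)).mpr (by simp [Finset.mem_Icc]; omega)
    simp only [Finset.mem_Icc] at h1m h3m
    omega
  have d23 : q2 < p3 ∨ q3 < p2 := by
    by_contra h
    push_neg at h
    have h2m := (m2 (max p2 p3)).mpr (by simp [Finset.mem_Icc]; omega)
    have h3m := (m3 (max p2 p3)).mpr (by simp [Finset.mem_Icc]; omega)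
    simp only [Finset.mem_Icc] at h2m h3m
    omega
  -- the middle block is adjacent to one of the outer blocks
  have key : (q1 + 1 = p2 ∨ q2 + 1 = p1) ∨ (q2 + 1 = p3 ∨ q3 + 1 = p2) := by
    omega
  rcases key with h | h
  · left
    refine ⟨ha, by omega, by omega, min p1 p2, max q1 q2, ?_⟩
    ext y
    rw [mem_image_symm]
    have hy1 := m1 y
    have hy2 := m2 y
    simp only [Finset.mem_Icc] at hy1 hy2 ⊢
    omega
  · right
    refine ⟨by omega, by omega, by omega, min p2 p3, max q2 q3, ?_⟩
    ext y
    rw [mem_image_symm]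
    have hy2 := m2 y
    have hy3 := m3 y
    simp only [Finset.mem_Icc] at hy2 hy3 ⊢
    omega
end

section
/- Let π be a block-wise simple permutation of [n]; that is, there do not exist 1 ≤ a ≤ b < c ≤ n such that [a,b], [b+1,c], and [a,c] are all intervals of π. Then the intervals of π form a laminar family: any two intervals I and J of π satisfy I ⊆ J, J ⊆ I, or I ∩ J = ∅. Consequently, the interval poset of π is a tree. -/
lemma overlap_key (n : ℕ) (π : Equiv.Perm ℕ) {a b c d : ℕ}
    (h1 : IsBlock n π a b) (h2 : IsBlock n π c d)
    (hac : a < c) (hcb : c ≤ b) (hbd : b < d) :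
    IsBlock n π a (c-1) ∧ IsBlock n π a d := by
  obtain ⟨ha1, hab, hbn, p, q, hS⟩ := h1
  obtain ⟨hc1, hcd, hdn, r, s, hT⟩ := h2
  have hinj := π.symm.injective
  have hxS : π.symm a ∈ Finset.Icc p q := by
    rw [← hS]; exact Finset.mem_image_of_mem _ (by simp [Finset.mem_Icc]; omega)
  have hxT : π.symm a ∉ Finset.Icc r s := by
    rw [← hT]; intro h
    obtain ⟨v, hv, hve⟩ := Finset.mem_image.mp h
    have := hinj hve
    simp [Finset.mem_Icc] at hv; omega
  have hyS : π.symm c ∈ Finset.Icc p q := by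
    rw [← hS]; exact Finset.mem_image_of_mem _ (by simp [Finset.mem_Icc]; omega)
  have hyT : π.symm c ∈ Finset.Icc r s := by
    rw [← hT]; exact Finset.mem_image_of_mem _ (by simp [Finset.mem_Icc]; omega)
  have hzT : π.symm d ∈ Finset.Icc r s := by
    rw [← hT]; exact Finset.mem_image_of_mem _ (by simp [Finset.mem_Icc]; omega)
  have hzS : π.symm d ∉ Finset.Icc p q := by
    rw [← hS]; intro h
    obtain ⟨v, hv, hve⟩ := Finset.mem_image.mp h
    have := hinj hve
    simp [Finset.mem_Icc] at hv; omega
  simp only [Finset.mem_Icc, not_and, not_le] at hxS hxT hyS hyT hzT hzS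
  have hsplit : Finset.Icc a d = Finset.Icc a b ∪ Finset.Icc c d := by
    ext v; simp [Finset.mem_Icc]; omega
  have hdiff : Finset.Icc a (c-1) = Finset.Icc a b \ Finset.Icc c d := by
    ext v; simp [Finset.mem_Icc]; omega
  have hU : (Finset.Icc a d).image π.symm = Finset.Icc p q ∪ Finset.Icc r s := by
    rw [hsplit, Finset.image_union, hS, hT]
  have hD : (Finset.Icc a (c-1)).image π.symm = Finset.Icc p q \ Finset.Icc r s := by
    rw [hdiff, Finset.image_sdiff _ _ hinj, hS, hT]
  have hcase : (p < r ∧ r ≤ q + 1 ∧ q < s) ∨ (r < p ∧ p ≤ s + 1 ∧ s < q) := by omega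
  constructor
  · refine ⟨ha1, by omega, by omega, ?_⟩
    rcases hcase with ⟨h1', h2', h3'⟩ | ⟨h1', h2', h3'⟩
    · exact ⟨p, r-1, by rw [hD]; ext v; simp [Finset.mem_Icc]; omega⟩
    · exact ⟨s+1, q, by rw [hD]; ext v; simp [Finset.mem_Icc]; omega⟩
  · refine ⟨ha1, by omega, by omega, ?_⟩
    rcases hcase with ⟨h1', h2', h3'⟩ | ⟨h1', h2', h3'⟩
    · exact ⟨p, s, by rw [hU]; ext v; simp [Finset.mem_Icc]; omega⟩
    · exact ⟨r, q, by rw [hU]; ext v; simp [Finset.mem_Icc]; omega⟩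

theorem blockwise_simple_laminar (n : ℕ) (π : Equiv.Perm ℕ) (hπ : PermOn n π)
    (hbs : ¬ ∃ a b c : ℕ, 1 ≤ a ∧ a ≤ b ∧ b < c ∧ c ≤ n ∧
      IsBlock n π a b ∧ IsBlock n π (b + 1) c ∧ IsBlock n π a c) :
    ∀ I J : Finset ℕ, IsIntervalSet n π I → IsIntervalSet n π J →
      I ⊆ J ∨ J ⊆ I ∨ I ∩ J = ∅ := by
  rintro I J ⟨a, b, rfl, hIb⟩ ⟨c, d, rfl, hJb⟩
  by_contra hcon
  push_neg at hcon
  obtain ⟨hIJ, hJI, hmeet⟩ := hcon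
  obtain ⟨u, huI, huJ⟩ := Finset.not_subset.mp hIJ
  obtain ⟨w, hwJ, hwI⟩ := Finset.not_subset.mp hJI
  obtain ⟨y, hy⟩ := hmeet
  rw [Finset.mem_inter] at hy
  obtain ⟨hyI, hyJ⟩ := hy
  simp only [Finset.mem_Icc, not_and, not_le] at huI huJ hwJ hwI hyI hyJ
  have := hIb.1; have := hIb.2.1; have := hJb.1; have := hJb.2.1
  have hcase : (a < c ∧ c ≤ b ∧ b < d) ∨ (c < a ∧ a ≤ d ∧ d < b) := by omega
  rcases hcase with ⟨h1, h2, h3⟩ | ⟨h1, h2, h3⟩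
  · obtain ⟨hB1, hB2⟩ := overlap_key n π hIb hJb h1 h2 h3
    exact hbs ⟨a, c-1, d, hIb.1, by omega, by omega, hJb.2.2.1,
      hB1, by have : c - 1 + 1 = c := by omega
              rw [this]; exact hJb, hB2⟩
  · obtain ⟨hB1, hB2⟩ := overlap_key n π hJb hIb h1 h2 h3
    exact hbs ⟨c, a-1, b, hJb.1, by omega, by omega, hIb.2.2.1,
      hB1, by have : a - 1 + 1 = a := by omega
              rw [this]; exact hIb, hB2⟩
end

section
/- For n ∈ {4, 5, 6}, a permutation π of [n] is block-wise simple if and only if it is simple. That is, for such n: π has no proper interval if and only if there do not exist 1 ≤ a ≤ b < c ≤ n such that [a,b], [b+1,c], and [a,c] are all intervals of π. -/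
namespace BWS

variable {n a b : ℕ} {π : Equiv.Perm ℕ}

lemma image_pi (hπ : PermOn n π) : (Finset.Icc 1 n).image π = Finset.Icc 1 n := by
  apply Finset.eq_of_subset_of_card_le
  · intro x hx
    obtain ⟨v, hv, rfl⟩ := Finset.mem_image.mp hx
    exact hπ v hv
  · rw [Finset.card_image_of_injective _ π.injective]

lemma symm_mem (hπ : PermOn n π) {v : ℕ} (hv : v ∈ Finset.Icc 1 n) :
    π.symm v ∈ Finset.Icc 1 n := by
  rw [← image_pi hπ] at hv
  obtain ⟨u, hu, h⟩ := Finset.mem_image.mp hv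
  rw [← h]; simpa using hu

lemma image_symm_pi (hπ : PermOn n π) : (Finset.Icc 1 n).image π.symm = Finset.Icc 1 n := by
  conv_lhs => rw [← image_pi hπ]
  rw [Finset.image_image]
  simp

lemma block_singleton (ha : 1 ≤ a) (han : a ≤ n) : IsBlock n π a a :=
  ⟨ha, le_rfl, han, π.symm a, π.symm a, by simp⟩

lemma block_full (hπ : PermOn n π) (hn : 1 ≤ n) : IsBlock n π 1 n :=
  ⟨le_rfl, hn, le_rfl, 1, n, image_symm_pi hπ⟩

lemma block_elim (hπ : PermOn n π) (h : IsBlock n π a b) :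
    ∃ c d, 1 ≤ c ∧ c ≤ d ∧ d ≤ n ∧ d - c = b - a ∧
      (Finset.Icc a b).image π.symm = Finset.Icc c d := by
  obtain ⟨h1, h2, h3, c, d, him⟩ := h
  have hcard : (Finset.Icc c d).card = b + 1 - a := by
    rw [← him, Finset.card_image_of_injective _ π.symm.injective, Nat.card_Icc]
  rw [Nat.card_Icc] at hcard
  have hmem : π.symm a ∈ Finset.Icc c d := by
    rw [← him]; exact Finset.mem_image_of_mem _ (by simp [h2])
  have hcd : c ≤ d := le_trans (Finset.mem_Icc.mp hmem).1 (Finset.mem_Icc.mp hmem).2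
  have hc : c ∈ Finset.Icc c d := by simp [hcd]
  have hd : d ∈ Finset.Icc c d := by simp [hcd]
  rw [← him] at hc hd
  obtain ⟨u, hu, huc⟩ := Finset.mem_image.mp hc
  obtain ⟨v, hv, hvd⟩ := Finset.mem_image.mp hd
  simp only [Finset.mem_Icc] at hu hv
  have hu' := Finset.mem_Icc.mp (symm_mem hπ (Finset.mem_Icc.mpr ⟨le_trans h1 hu.1, le_trans hu.2 h3⟩))
  have hv' := Finset.mem_Icc.mp (symm_mem hπ (Finset.mem_Icc.mpr ⟨le_trans h1 hv.1, le_trans hv.2 h3⟩))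
  rw [huc] at hu'
  rw [hvd] at hv'
  exact ⟨c, d, hu'.1, hcd, hv'.2, by omega, him⟩

lemma block_of_adj (ha : 1 ≤ a) (hb : a + 1 ≤ n)
    (h : π.symm (a + 1) = π.symm a + 1 ∨ π.symm a = π.symm (a + 1) + 1) :
    IsBlock n π a (a + 1) := by
  refine ⟨ha, by omega, hb, ?_⟩
  have hset : Finset.Icc a (a + 1) = {a, a + 1} := by ext x; simp; omega
  rcases h with h | h
  · refine ⟨π.symm a, π.symm (a + 1), ?_⟩
    rw [hset, Finset.image_insert, Finset.image_singleton]
    ext x; simp; omega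
  · refine ⟨π.symm (a + 1), π.symm a, ?_⟩
    rw [hset, Finset.image_insert, Finset.image_singleton]
    ext x; simp; omega

lemma symm_ne {u v : ℕ} (h : u ≠ v) : π.symm u ≠ π.symm v :=
  fun he => h (π.symm.injective he)

lemma block3 (hπ : PermOn n π) (h : IsBlock n π a (a + 2)) :
    IsBlock n π a (a + 1) ∨ IsBlock n π (a + 1) (a + 2) := by
  have h1 := h.1
  have h3 := h.2.2.1
  obtain ⟨c, d, hc1, hcd, hdn, hsub, him⟩ := block_elim hπ h
  have m0 : π.symm a ∈ Finset.Icc c d := by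
    rw [← him]; exact Finset.mem_image_of_mem _ (by simp)
  have m1 : π.symm (a + 1) ∈ Finset.Icc c d := by
    rw [← him]; exact Finset.mem_image_of_mem _ (by simp)
  have m2 : π.symm (a + 2) ∈ Finset.Icc c d := by
    rw [← him]; exact Finset.mem_image_of_mem _ (by simp)
  have d01 : π.symm a ≠ π.symm (a + 1) := symm_ne (by omega)
  have d12 : π.symm (a + 1) ≠ π.symm (a + 2) := symm_ne (by omega)
  have d02 : π.symm a ≠ π.symm (a + 2) := symm_ne (by omega)
  simp only [Finset.mem_Icc] at m0 m1 m2
  have key : (π.symm (a + 1) = π.symm a + 1 ∨ π.symm a = π.symm (a + 1) + 1) ∨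
      (π.symm (a + 2) = π.symm (a + 1) + 1 ∨ π.symm (a + 1) = π.symm (a + 2) + 1) := by
    omega
  rcases key with key | key
  · exact Or.inl (block_of_adj h1 (by omega) key)
  · exact Or.inr (block_of_adj (by omega) h3 key)


/-- The "decomposable" conclusion. -/
def Decomp (n : ℕ) (π : Equiv.Perm ℕ) : Prop :=
  ∃ a b c : ℕ, 1 ≤ a ∧ a ≤ b ∧ b < c ∧ c ≤ n ∧
    IsBlock n π a b ∧ IsBlock n π (b + 1) c ∧ IsBlock n π a c

lemma decomp_of_2 (h : IsBlock n π a (a + 1)) : Decomp n π := by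
  refine ⟨a, a, a + 1, h.1, le_rfl, by omega, h.2.2.1, ?_, ?_, h⟩
  · exact block_singleton h.1 (by have := h.2.2.1; omega)
  · exact block_singleton (by omega) h.2.2.1

lemma decomp_of_top1 (hπ : PermOn n π) (hn : 2 ≤ n) (h : IsBlock n π 1 (n - 1)) :
    Decomp n π := by
  refine ⟨1, n - 1, n, le_rfl, by omega, by omega, le_rfl, h, ?_, block_full hπ (by omega)⟩
  have he : n - 1 + 1 = n := by omega
  rw [he]
  exact block_singleton (by omega) le_rfl

lemma decomp_of_top2 (hπ : PermOn n π) (hn : 2 ≤ n) (h : IsBlock n π 2 n) :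
    Decomp n π :=
  ⟨1, 1, n, le_rfl, le_rfl, by omega, le_rfl, block_singleton le_rfl (by omega), h,
    block_full hπ (by omega)⟩

lemma insert_adj {s c d : ℕ} (hcd : c ≤ d) (hs : (s = c - 1 ∧ 1 ≤ c) ∨ s = d + 1) :
    ∃ c' d', insert s (Finset.Icc c d) = Finset.Icc c' d' := by
  rcases hs with ⟨rfl, h⟩ | rfl
  · exact ⟨c - 1, d, by ext x; simp; omega⟩
  · exact ⟨c, d + 1, by ext x; simp; omega⟩

lemma block_of_insert {u w v a b c d : ℕ} (h1 : 1 ≤ u) (h2 : u ≤ w) (h3 : w ≤ n)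
    (heq : Finset.Icc u w = insert v (Finset.Icc a b))
    (him : (Finset.Icc a b).image π.symm = Finset.Icc c d) (hcd : c ≤ d)
    (hs : (π.symm v = c - 1 ∧ 1 ≤ c) ∨ π.symm v = d + 1) : IsBlock n π u w := by
  refine ⟨h1, h2, h3, ?_⟩
  rw [heq, Finset.image_insert, him]
  exact insert_adj hcd hs

lemma block4 (hπ : PermOn 6 π) {a : ℕ} (h : IsBlock 6 π a (a + 3)) :
    (∃ u, IsBlock 6 π u (u + 1)) ∨ IsBlock 6 π 1 5 ∨ IsBlock 6 π 2 6 := by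
  have h1 := h.1
  have h3 := h.2.2.1
  obtain ⟨c, d, hc1, hcd, hdn, hsub, him⟩ := block_elim hπ h
  have hd : d = c + 3 := by omega
  subst hd
  have compl : ∀ v, 1 ≤ v → v ≤ 6 → (v < a ∨ a + 3 < v) →
      1 ≤ π.symm v ∧ π.symm v ≤ 6 ∧ (π.symm v < c ∨ c + 3 < π.symm v) := by
    intro v hv1 hv2 hv3
    have hv6 := Finset.mem_Icc.mp (symm_mem hπ (Finset.mem_Icc.mpr ⟨hv1, hv2⟩))
    refine ⟨hv6.1, hv6.2, ?_⟩
    by_contra hcon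
    push_neg at hcon
    have hmem : π.symm v ∈ Finset.Icc c (c + 3) := Finset.mem_Icc.mpr ⟨hcon.1, hcon.2⟩
    rw [← him] at hmem
    obtain ⟨u, hu, huv⟩ := Finset.mem_image.mp hmem
    have := π.symm.injective huv
    subst this
    simp only [Finset.mem_Icc] at hu
    omega
  have ha : a = 1 ∨ a = 2 ∨ a = 3 := by omega
  have hc : c = 1 ∨ c = 2 ∨ c = 3 := by omega
  rcases ha with rfl | rfl | rfl
  · -- a = 1 : complement values {5, 6}
    have c5 := compl 5 (by omega) (by omega) (by omega)
    have c6 := compl 6 (by omega) (by omega) (by omega)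
    rcases hc with rfl | rfl | rfl
    · -- positions {5,6}
      have hne := symm_ne (π := π) (show (5:ℕ) ≠ 6 by omega)
      exact Or.inl ⟨5, block_of_adj (by omega) (by omega) (by norm_num; omega)⟩
    · -- positions {1,6}
      have hs5 : π.symm 5 = 1 ∨ π.symm 5 = 6 := by omega
      refine Or.inr (Or.inl ?_)
      refine block_of_insert (by omega) (by omega) (by omega)
        (show Finset.Icc 1 5 = insert 5 (Finset.Icc 1 4) by ext x; simp; omega)
        him (by omega) ?_
      rcases hs5 with h5 | h5
      · exact Or.inl ⟨by omega, by omega⟩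
      · exact Or.inr (by omega)
    · -- positions {1,2}
      have hne := symm_ne (π := π) (show (5:ℕ) ≠ 6 by omega)
      exact Or.inl ⟨5, block_of_adj (by omega) (by omega) (by norm_num; omega)⟩
  · -- a = 2 : complement values {1, 6}
    have c1 := compl 1 (by omega) (by omega) (by omega)
    have c6 := compl 6 (by omega) (by omega) (by omega)
    have hne := symm_ne (π := π) (show (1:ℕ) ≠ 6 by omega)
    rcases hc with rfl | rfl | rfl
    · -- positions {5,6}
      have hs1 : π.symm 1 = 5 ∨ π.symm 1 = 6 := by omega
      rcases hs1 with h5 | h5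
      · refine Or.inr (Or.inl (block_of_insert (by omega) (by omega) (by omega)
          (show Finset.Icc 1 5 = insert 1 (Finset.Icc 2 5) by ext x; simp; omega)
          him (by omega) (Or.inr (by omega))))
      · have hs6 : π.symm 6 = 5 := by omega
        refine Or.inr (Or.inr (block_of_insert (by omega) (by omega) (by omega)
          (show Finset.Icc 2 6 = insert 6 (Finset.Icc 2 5) by ext x; simp; omega)
          him (by omega) (Or.inr (by omega))))
    · -- positions {1,6}
      refine Or.inr (Or.inl (block_of_insert (by omega) (by omega) (by omega)
        (show Finset.Icc 1 5 = insert 1 (Finset.Icc 2 5) by ext x; simp; omega)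
        him (by omega) ?_))
      have hs1 : π.symm 1 = 1 ∨ π.symm 1 = 6 := by omega
      rcases hs1 with h5 | h5
      · exact Or.inl ⟨by omega, by omega⟩
      · exact Or.inr (by omega)
    · -- positions {1,2}
      have hs1 : π.symm 1 = 1 ∨ π.symm 1 = 2 := by omega
      rcases hs1 with h5 | h5
      · have hs6 : π.symm 6 = 2 := by omega
        refine Or.inr (Or.inr (block_of_insert (by omega) (by omega) (by omega)
          (show Finset.Icc 2 6 = insert 6 (Finset.Icc 2 5) by ext x; simp; omega)
          him (by omega) (Or.inl ⟨by omega, by omega⟩)))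
      · refine Or.inr (Or.inl (block_of_insert (by omega) (by omega) (by omega)
          (show Finset.Icc 1 5 = insert 1 (Finset.Icc 2 5) by ext x; simp; omega)
          him (by omega) (Or.inl ⟨by omega, by omega⟩)))
  · -- a = 3 : complement values {1, 2}
    have c1 := compl 1 (by omega) (by omega) (by omega)
    have c2 := compl 2 (by omega) (by omega) (by omega)
    have hne := symm_ne (π := π) (show (1:ℕ) ≠ 2 by omega)
    rcases hc with rfl | rfl | rfl
    · exact Or.inl ⟨1, block_of_adj (by omega) (by omega) (by norm_num; omega)⟩
    · -- positions {1,6}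
      refine Or.inr (Or.inr (block_of_insert (by omega) (by omega) (by omega)
        (show Finset.Icc 2 6 = insert 2 (Finset.Icc 3 6) by ext x; simp; omega)
        him (by omega) ?_))
      have hs2 : π.symm 2 = 1 ∨ π.symm 2 = 6 := by omega
      rcases hs2 with h5 | h5
      · exact Or.inl ⟨by omega, by omega⟩
      · exact Or.inr (by omega)
    · exact Or.inl ⟨1, block_of_adj (by omega) (by omega) (by norm_num; omega)⟩


lemma main_hard (hn : n = 4 ∨ n = 5 ∨ n = 6) (hπ : PermOn n π) (h : IsBlock n π a b)
    (hab : a < b) (hne : ¬(a = 1 ∧ b = n)) : Decomp n π := by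
  have h1 := h.1
  have h3 := h.2.2.1
  have hn46 : 4 ≤ n ∧ n ≤ 6 := by rcases hn with rfl | rfl | rfl <;> omega
  have hsize : b - a + 2 ≤ n := by
    by_contra hc
    exact hne ⟨by omega, by omega⟩
  rcases (show b = a + 1 ∨ b = a + 2 ∨ (a = 2 ∧ b = n) ∨ (a = 1 ∧ b = n - 1) ∨
      (n = 6 ∧ b = a + 3) by omega) with rfl | rfl | ⟨rfl, rfl⟩ | ⟨rfl, rfl⟩ | ⟨rfl, rfl⟩
  · exact decomp_of_2 h
  · rcases block3 hπ h with h' | h'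
    · exact decomp_of_2 h'
    · exact decomp_of_2 h'
  · exact decomp_of_top2 hπ (by omega) h
  · exact decomp_of_top1 hπ (by omega) h
  · rcases block4 hπ h with ⟨u, h'⟩ | h' | h'
    · exact decomp_of_2 h'
    · exact decomp_of_top1 hπ (by omega) (by norm_num; exact h')
    · exact decomp_of_top2 hπ (by omega) h'

end BWS

theorem blockwise_simple_iff_simple_small (n : ℕ) (hn : n = 4 ∨ n = 5 ∨ n = 6)
    (π : Equiv.Perm ℕ) (hπ : PermOn n π) :
    (¬ ∃ a b : ℕ, IsBlock n π a b ∧ a < b ∧ ¬ (a = 1 ∧ b = n)) ↔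
    (¬ ∃ a b c : ℕ, 1 ≤ a ∧ a ≤ b ∧ b < c ∧ c ≤ n ∧
      IsBlock n π a b ∧ IsBlock n π (b + 1) c ∧ IsBlock n π a c) := by
  have hn46 : 4 ≤ n ∧ n ≤ 6 := by rcases hn with rfl | rfl | rfl <;> omega
  constructor
  · intro hL
    rintro ⟨a, b, c, h1, h2, h3, h4, hb1, hb2, hb3⟩
    apply hL
    rcases lt_or_eq_of_le h2 with hlt | rfl
    · exact ⟨a, b, hb1, hlt, fun ⟨_, hbn⟩ => by omega⟩
    · rcases (show a + 1 = c ∨ a + 1 < c by omega) with he | hlt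
      · refine ⟨a, c, hb3, by omega, fun ⟨ha1, hcn⟩ => by omega⟩
      · exact ⟨a + 1, c, hb2, hlt, fun ⟨ha1, _⟩ => by omega⟩
  · intro hR
    rintro ⟨a, b, hb, hab, hne⟩
    exact hR (BWS.main_hard hn hπ hb hab hne)
end

section
/- Let π be a permutation of [n]. The intervals of π are pairwise nested or disjoint (equivalently, the interval poset of π is a tree) if and only if there do not exist 1 ≤ a ≤ x < y < b ≤ n such that [a,x], [x+1,y], [y+1,b], [a,y], [x+1,b], and [a,b] are all intervals of π (i.e., π contains no interval of the form p₁ ⊕ p₂ ⊕ p₃ or p₁ ⊖ p₂ ⊖ p₃). -/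
lemma Icc_sdiff_Icc (c₁ d₁ c₂ d₂ w : ℕ)
    (hw : w ∈ Finset.Icc c₂ d₂ \ Finset.Icc c₁ d₁) :
    ∃ e f, Finset.Icc c₁ d₁ \ Finset.Icc c₂ d₂ = Finset.Icc e f := by
  simp only [Finset.mem_sdiff, Finset.mem_Icc] at hw
  by_cases hc : c₂ ≤ c₁
  · exact ⟨max c₁ (d₂ + 1), d₁, by
      ext z; simp only [Finset.mem_sdiff, Finset.mem_Icc]; omega⟩
  · exact ⟨c₁, min d₁ (c₂ - 1), by
      ext z; simp only [Finset.mem_sdiff, Finset.mem_Icc]; omega⟩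

lemma overlap_blocks (n : ℕ) (π : Equiv.Perm ℕ) {a b c d : ℕ}
    (hab : IsBlock n π a b) (hcd : IsBlock n π c d)
    (h1 : a < c) (h2 : c ≤ b) (h3 : b < d) :
    IsBlock n π a (c - 1) ∧ IsBlock n π c b ∧ IsBlock n π (b + 1) d ∧
      IsBlock n π a d := by
  obtain ⟨ha1, hab', hbn, c₁, d₁, hS1⟩ := hab
  obtain ⟨hc1, hcd', hdn, c₂, d₂, hS2⟩ := hcd
  have hinj : Function.Injective (π.symm : ℕ → ℕ) := π.symm.injective
  -- intersection
  have hIcb : Finset.Icc c b = Finset.Icc a b ∩ Finset.Icc c d := by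
    ext z; simp only [Finset.mem_inter, Finset.mem_Icc]; omega
  have himg_cb : (Finset.Icc c b).image π.symm =
      Finset.Icc c₁ d₁ ∩ Finset.Icc c₂ d₂ := by
    rw [hIcb, Finset.image_inter _ _ hinj, hS1, hS2]
  -- witnesses
  have hx : π.symm c ∈ Finset.Icc c₁ d₁ ∩ Finset.Icc c₂ d₂ := by
    rw [← himg_cb]; exact Finset.mem_image_of_mem _ (by simp [Finset.mem_Icc]; omega)
  -- sdiff sets
  have hIac : Finset.Icc a (c - 1) = Finset.Icc a b \ Finset.Icc c d := by
    ext z; simp only [Finset.mem_sdiff, Finset.mem_Icc]; omega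
  have hIbd : Finset.Icc (b + 1) d = Finset.Icc c d \ Finset.Icc a b := by
    ext z; simp only [Finset.mem_sdiff, Finset.mem_Icc]; omega
  have himg_ac : (Finset.Icc a (c - 1)).image π.symm =
      Finset.Icc c₁ d₁ \ Finset.Icc c₂ d₂ := by
    rw [hIac, Finset.image_sdiff _ _ hinj, hS1, hS2]
  have himg_bd : (Finset.Icc (b + 1) d).image π.symm =
      Finset.Icc c₂ d₂ \ Finset.Icc c₁ d₁ := by
    rw [hIbd, Finset.image_sdiff _ _ hinj, hS2, hS1]
  have hu : π.symm a ∈ Finset.Icc c₁ d₁ \ Finset.Icc c₂ d₂ := by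
    rw [← himg_ac]; exact Finset.mem_image_of_mem _ (by simp [Finset.mem_Icc]; omega)
  have hw : π.symm (b + 1) ∈ Finset.Icc c₂ d₂ \ Finset.Icc c₁ d₁ := by
    rw [← himg_bd]; exact Finset.mem_image_of_mem _ (by simp [Finset.mem_Icc]; omega)
  -- union
  have hIad : Finset.Icc a d = Finset.Icc a b ∪ Finset.Icc c d := by
    ext z; simp only [Finset.mem_union, Finset.mem_Icc]; omega
  have himg_ad : (Finset.Icc a d).image π.symm =
      Finset.Icc c₁ d₁ ∪ Finset.Icc c₂ d₂ := by
    rw [hIad, Finset.image_union, hS1, hS2]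
  simp only [Finset.mem_inter, Finset.mem_Icc] at hx
  refine ⟨⟨ha1, by omega, by omega, ?_⟩, ⟨by omega, h2, hbn, ?_⟩,
    ⟨by omega, by omega, hdn, ?_⟩, ⟨ha1, by omega, hdn, ?_⟩⟩
  · rw [himg_ac]; exact Icc_sdiff_Icc _ _ _ _ _ hw
  · exact ⟨max c₁ c₂, min d₁ d₂, by
      rw [himg_cb]; ext z
      simp only [Finset.mem_inter, Finset.mem_Icc]; omega⟩
  · rw [himg_bd]; exact Icc_sdiff_Icc _ _ _ _ _ hu
  · exact ⟨min c₁ c₂, max d₁ d₂, by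
      rw [himg_ad]; ext z
      simp only [Finset.mem_union, Finset.mem_Icc]; omega⟩

theorem tree_iff_no_triple_sum (n : ℕ) (π : Equiv.Perm ℕ) (hπ : PermOn n π) :
    (∀ I J : Finset ℕ, IsIntervalSet n π I → IsIntervalSet n π J →
      I ⊆ J ∨ J ⊆ I ∨ I ∩ J = ∅) ↔
    ¬ ∃ a x y b : ℕ, 1 ≤ a ∧ a ≤ x ∧ x < y ∧ y < b ∧ b ≤ n ∧
      IsBlock n π a x ∧ IsBlock n π (x + 1) y ∧ IsBlock n π (y + 1) b ∧
      IsBlock n π a y ∧ IsBlock n π (x + 1) b ∧ IsBlock n π a b := by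
  constructor
  · rintro htree ⟨a, x, y, b, h1, h2, h3, h4, h5, _, _, _, hay, hxb, _⟩
    have := htree (Finset.Icc a y) (Finset.Icc (x + 1) b)
      ⟨a, y, rfl, hay⟩ ⟨x + 1, b, rfl, hxb⟩
    rcases this with h | h | h
    · have := h (Finset.mem_Icc.mpr ⟨le_refl a, by omega⟩)
      simp only [Finset.mem_Icc] at this; omega
    · have := h (Finset.mem_Icc.mpr ⟨by omega, le_refl b⟩)
      simp only [Finset.mem_Icc] at this; omega
    · have : x + 1 ∈ Finset.Icc a y ∩ Finset.Icc (x + 1) b := by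
        simp only [Finset.mem_inter, Finset.mem_Icc]; omega
      rw [h] at this; exact absurd this (Finset.notMem_empty _)
  · intro hno I J hI hJ
    by_contra hcon
    push_neg at hcon
    obtain ⟨hIJ, hJI, hint⟩ := hcon
    obtain ⟨a, b, rfl, hab⟩ := hI
    obtain ⟨c, d, rfl, hcd⟩ := hJ
    have hab' := hab.2.1
    have hcd' := hcd.2.1
    obtain ⟨z, hz⟩ := hint
    simp only [Finset.mem_inter, Finset.mem_Icc] at hz
    have h1 : a < c ∨ d < b := by
      obtain ⟨x, hx, hx'⟩ := Finset.not_subset.mp hIJ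
      simp only [Finset.mem_Icc] at hx hx'; omega
    have h2 : c < a ∨ b < d := by
      obtain ⟨x, hx, hx'⟩ := Finset.not_subset.mp hJI
      simp only [Finset.mem_Icc] at hx hx'; omega
    rcases h1 with h1 | h1
    · have h3 : b < d := by omega
      obtain ⟨B1, B2, B3, B4⟩ := overlap_blocks n π hab hcd h1 (by omega) h3
      apply hno
      refine ⟨a, c - 1, b, d, hab.1, by omega, by omega, h3, hcd.2.2.1, B1, ?_, B3, hab, ?_, B4⟩
      · have : c - 1 + 1 = c := by omega
        rw [this]; exact B2
      · have : c - 1 + 1 = c := by omega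
        rw [this]; exact hcd
    · have h3 : c < a := by omega
      obtain ⟨B1, B2, B3, B4⟩ := overlap_blocks n π hcd hab h3 (by omega) h1
      apply hno
      refine ⟨c, a - 1, d, b, hcd.1, by omega, by omega, h1, hab.2.2.1, B1, ?_, B3, hcd, ?_, B4⟩
      · have : a - 1 + 1 = a := by omega
        rw [this]; exact B2
      · have : a - 1 + 1 = a := by omega
        rw [this]; exact hab
end
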